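/- Among all bi-infinite sequences α ∈ {1,2}^ℤ that do not contain the word (1,2,1) as a factor, the supremum of the Markov values m(α) equals 4√30/7, and it is attained: m(α) ≤ 4√30/7 for every α ∈ {1,2}^ℤ without the factor (1,2,1), with equality for the periodic sequence of period (2,1,2,2), whose Markov value is [2; \overline{1,2,2,2}] + [0; \overline{2,2,1,2}] = 4√30/7. -/

import Mathlib

open Filter Set MeasureTheory
open scoped ENNReal

/-- Finite continued fraction `[a 0; a 1, ..., a n]`. -/
noncomputable def cfConv : (ℕ → ℝ) → ℕ → ℝ
  | a, 0 => a 0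
  | a, n + 1 => a 0 + 1 / cfConv (fun i => a (i + 1)) n

/-- Value of the infinite continued fraction `[a 0; a 1, a 2, ...]`,
as the limit of its convergents. -/
noncomputable def cfVal (a : ℕ → ℝ) : ℝ := limUnder atTop (cfConv a)

/-- `λ_k(α) = [α_k; α_{k+1}, ...] + [0; α_{k-1}, α_{k-2}, ...]`. -/
noncomputable def lambdaVal (α : ℤ → ℕ) (k : ℤ) : ℝ :=
  cfVal (fun n => (α (k + n) : ℝ)) +
  cfVal (fun n => if n = 0 then 0 else (α (k - n) : ℝ))

/-- The Markov value `m(α) = sup_{k ∈ ℤ} λ_k(α)`. -/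
noncomputable def markovValue (α : ℤ → ℕ) : ℝ := ⨆ k : ℤ, lambdaVal α k

/-- The Markov spectrum. -/
def markovSpectrum : Set ℝ :=
  { x | ∃ α : ℤ → ℕ, (∀ n, 0 < α n) ∧ BddAbove (range (lambdaVal α)) ∧
      markovValue α = x }

/-- The dimension function `d(t) = dim_H (M ∩ (-∞, t))`. -/
noncomputable def dimFun (t : ℝ) : ℝ≥0∞ := dimH (markovSpectrum ∩ Iio t)

/-- A finite word `w` is a factor of the bi-infinite sequence `α`. -/
def hasFactor (α : ℤ → ℕ) (w : List ℕ) : Prop :=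
  ∃ j : ℤ, ∀ i : Fin w.length, α (j + (i : ℕ)) = w.get i

/-- The bi-infinite periodic sequence of period `(2,1,2,2)`. -/
def per2122 : ℤ → ℕ := fun n => if n % 4 = 1 then 1 else 2

section CFAux

noncomputable def cfFin : (ℕ → ℝ) → ℕ → ℝ → ℝ
  | _, 0, t => t
  | a, n + 1, t => a 0 + 1 / cfFin (fun i => a (i + 1)) n t

@[simp] lemma cfFin_zero (a : ℕ → ℝ) (t : ℝ) : cfFin a 0 t = t := rfl
@[simp] lemma cfFin_succ (a : ℕ → ℝ) (n : ℕ) (t : ℝ) :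
    cfFin a (n + 1) t = a 0 + 1 / cfFin (fun i => a (i + 1)) n t := rfl
@[simp] lemma cfConv_zero (a : ℕ → ℝ) : cfConv a 0 = a 0 := rfl
@[simp] lemma cfConv_succ (a : ℕ → ℝ) (n : ℕ) :
    cfConv a (n + 1) = a 0 + 1 / cfConv (fun i => a (i + 1)) n := rfl

def Digits (a : ℕ → ℝ) : Prop := ∀ i, 1 ≤ a i ∧ a i ≤ 2

lemma Digits.tail {a : ℕ → ℝ} (h : Digits a) : Digits (fun i => a (i + 1)) :=
  fun i => h (i + 1)

lemma cfConv_eq_cfFin (a : ℕ → ℝ) (n : ℕ) : cfConv a n = cfFin a n (a n) := by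
  induction n generalizing a with
  | zero => rfl
  | succ n ih => simp [ih]

/-- seeds in [1,3] stay in [1,3] -/
lemma cfFin_mem (a : ℕ → ℝ) (h : Digits a) (n : ℕ) (t : ℝ) (ht1 : 1 ≤ t) (ht3 : t ≤ 3) :
    1 ≤ cfFin a n t ∧ cfFin a n t ≤ 3 := by
  induction n generalizing a with
  | zero => exact ⟨ht1, ht3⟩
  | succ n ih =>
    obtain ⟨h1, h3⟩ := ih (fun i => a (i + 1)) h.tail
    have h0 : (0:ℝ) < cfFin (fun i => a (i + 1)) n t := by linarith
    have := (h 0).1; have := (h 0).2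
    constructor
    · have : 1 / cfFin (fun i => a (i + 1)) n t ≥ 0 := by positivity
      simp only [cfFin_succ]; linarith
    · have : 1 / cfFin (fun i => a (i + 1)) n t ≤ 1 := by
        rw [div_le_one h0]; linarith
      simp only [cfFin_succ]; linarith

lemma cfFin_mem' (a : ℕ → ℝ) (h : Digits a) (n : ℕ) (t : ℝ) (ht1 : 1 ≤ t) (ht3 : t ≤ 3) :
    4/3 ≤ cfFin a (n + 1) t ∧ cfFin a (n + 1) t ≤ 3 := by
  obtain ⟨h1, h3⟩ := cfFin_mem (fun i => a (i + 1)) h.tail n t ht1 ht3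
  have h0 : (0:ℝ) < cfFin (fun i => a (i + 1)) n t := by linarith
  have := (h 0).1; have := (h 0).2
  constructor
  · have : 1 / cfFin (fun i => a (i + 1)) n t ≥ 1/3 := by
      rw [ge_iff_le, le_div_iff₀ h0]; linarith
    simp only [cfFin_succ]; linarith
  · have : 1 / cfFin (fun i => a (i + 1)) n t ≤ 1 := by
      rw [div_le_one h0]; linarith
    simp only [cfFin_succ]; linarith

lemma cfFin_contract (a : ℕ → ℝ) (h : Digits a) (n : ℕ) (s t : ℝ)
    (hs1 : 1 ≤ s) (hs3 : s ≤ 3) (ht1 : 1 ≤ t) (ht3 : t ≤ 3) :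
    |cfFin a (n + 1) s - cfFin a (n + 1) t| ≤ (9/16)^n * |s - t| := by
  induction n generalizing a with
  | zero =>
    simp only [cfFin_succ, cfFin_zero, pow_zero, one_mul]
    have hs0 : (0:ℝ) < s := by linarith
    have ht0 : (0:ℝ) < t := by linarith
    have : a 0 + 1/s - (a 0 + 1/t) = (t - s) / (s * t) := by field_simp; ring
    rw [this, abs_div, abs_of_pos (mul_pos hs0 ht0)]
    rw [div_le_iff₀ (by positivity), abs_sub_comm t s]
    nlinarith [mul_nonneg (abs_nonneg (s - t)) (by nlinarith : (0:ℝ) ≤ s * t - 1)]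
  | succ n ih =>
    have hu := cfFin_mem' (fun i => a (i + 1)) h.tail n s hs1 hs3
    have hv := cfFin_mem' (fun i => a (i + 1)) h.tail n t ht1 ht3
    set u := cfFin (fun i => a (i + 1)) (n + 1) s with hudef
    set v := cfFin (fun i => a (i + 1)) (n + 1) t with hvdef
    have hd : |u - v| ≤ (9/16)^n * |s - t| := ih (fun i => a (i + 1)) h.tail
    have hu0 : (0:ℝ) < u := by linarith [hu.1]
    have hv0 : (0:ℝ) < v := by linarith [hv.1]
    have key : cfFin a (n + 1 + 1) s - cfFin a (n + 1 + 1) t = (v - u) / (u * v) := by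
      rw [cfFin_succ a (n + 1) s, cfFin_succ a (n + 1) t, ← hudef, ← hvdef]
      field_simp; ring
    rw [key, abs_div, abs_of_pos (mul_pos hu0 hv0), abs_sub_comm v u]
    have huv : (16:ℝ)/9 ≤ u * v := by nlinarith [hu.1, hv.1]
    have : |u - v| / (u * v) ≤ |u - v| * (9/16) := by
      rw [div_le_iff₀ (by positivity)]
      nlinarith [abs_nonneg (u - v)]
    calc |u - v| / (u * v) ≤ |u - v| * (9/16) := this
      _ ≤ ((9/16)^n * |s - t|) * (9/16) := by nlinarith
      _ = (9/16)^(n+1) * |s - t| := by ring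

lemma cfFin_comp (a : ℕ → ℝ) (n k : ℕ) (t : ℝ) :
    cfFin a (n + k) t = cfFin a n (cfFin (fun i => a (i + n)) k t) := by
  induction n generalizing a with
  | zero => simp
  | succ n ih =>
    have : n + 1 + k = (n + k) + 1 := by omega
    rw [this]
    simp only [cfFin_succ]
    rw [ih (fun i => a (i + 1))]
    have : (fun i => a (i + n + 1)) = (fun i => a (i + (n + 1))) := by
      funext i; rfl
    rw [this]

lemma cfConv_mem (a : ℕ → ℝ) (h : Digits a) (n : ℕ) :
    1 ≤ cfConv a n ∧ cfConv a n ≤ 3 := by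
  rw [cfConv_eq_cfFin]
  exact cfFin_mem a h n (a n) (h n).1 (by linarith [(h n).2])

lemma cfConv_mem' (a : ℕ → ℝ) (h : Digits a) (n : ℕ) :
    4/3 ≤ cfConv a (n + 1) ∧ cfConv a (n + 1) ≤ 3 := by
  rw [cfConv_eq_cfFin]
  exact cfFin_mem' a h n (a (n + 1)) (h (n + 1)).1 (by linarith [(h (n + 1)).2])

lemma cfConv_cauchy (a : ℕ → ℝ) (h : Digits a) : CauchySeq (cfConv a) := by
  apply cauchySeq_of_le_geometric (9/16 : ℝ) (32/9) (by norm_num)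
  intro n
  rw [Real.dist_eq]
  cases n with
  | zero =>
    have h1 := (h 1).1
    have : cfConv a 0 - cfConv a 1 = -(1 / a 1) := by
      show a 0 - (a 0 + 1 / cfConv (fun i => a (i + 1)) 0) = _
      show a 0 - (a 0 + 1 / a 1) = _
      ring
    rw [this, abs_neg, abs_of_pos (by positivity)]
    rw [div_le_iff₀ (by positivity)]
    nlinarith
  | succ m =>
    have e1 : cfConv a (m + 1) = cfFin a (m + 1) (a (m + 1)) := cfConv_eq_cfFin a (m + 1)
    have e2 : cfConv a (m + 1 + 1) =
        cfFin a (m + 1) (cfFin (fun i => a (i + (m + 1))) 1 (a (m + 1 + 1))) := by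
      rw [cfConv_eq_cfFin]
      have : m + 1 + 1 = (m + 1) + 1 := rfl
      rw [cfFin_comp a (m + 1) 1]
    set t := cfFin (fun i => a (i + (m + 1))) 1 (a (m + 1 + 1)) with htdef
    have hdt : Digits (fun i => a (i + (m + 1))) := fun i => h (i + (m + 1))
    have ht : 1 ≤ t ∧ t ≤ 3 := by
      have := cfFin_mem (fun i => a (i + (m + 1))) hdt 1 (a (m + 1 + 1))
        (h (m + 1 + 1)).1 (by linarith [(h (m + 1 + 1)).2])
      exact this
    have hc := cfFin_contract a h m (a (m + 1)) t (h (m + 1)).1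
      (by linarith [(h (m + 1)).2]) ht.1 ht.2
    rw [e1, e2]
    calc |cfFin a (m + 1) (a (m + 1)) - cfFin a (m + 1) t| ≤ (9/16)^m * |a (m + 1) - t| := hc
      _ ≤ (9/16)^m * 2 := by
          have : |a (m + 1) - t| ≤ 2 := by
            rw [abs_le]; constructor <;> nlinarith [(h (m + 1)).1, (h (m + 1)).2, ht.1, ht.2]
          nlinarith [pow_pos (by norm_num : (0:ℝ) < 9/16) m]
      _ = 32/9 * (9/16)^(m + 1) := by ring

lemma cfVal_spec (a : ℕ → ℝ) (h : Digits a) :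
    Filter.Tendsto (cfConv a) atTop (nhds (cfVal a)) := by
  obtain ⟨x, hx⟩ := cauchySeq_tendsto_of_complete (cfConv_cauchy a h)
  rw [cfVal, hx.limUnder_eq]
  exact hx

lemma cfVal_mem (a : ℕ → ℝ) (h : Digits a) : 4/3 ≤ cfVal a ∧ cfVal a ≤ 3 := by
  have hs := cfVal_spec a h
  constructor
  · apply ge_of_tendsto hs
    filter_upwards [eventually_ge_atTop 1] with n hn
    obtain ⟨m, rfl⟩ : ∃ m, n = m + 1 := ⟨n - 1, by omega⟩
    exact (cfConv_mem' a h m).1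
  · apply le_of_tendsto hs
    filter_upwards [eventually_ge_atTop 1] with n hn
    obtain ⟨m, rfl⟩ : ∃ m, n = m + 1 := ⟨n - 1, by omega⟩
    exact (cfConv_mem' a h m).2

lemma cfVal_rec (f : ℕ → ℝ) (h : Digits (fun i => f (i + 1))) :
    cfVal f = f 0 + 1 / cfVal (fun i => f (i + 1)) := by
  set Y := cfVal (fun i => f (i + 1)) with hY
  have hYm := cfVal_mem _ h
  have hY0 : Y ≠ 0 := ne_of_gt (lt_of_lt_of_le (by norm_num) hYm.1)
  have hYs := cfVal_spec _ h
  have ht : Filter.Tendsto (fun n => cfConv f (n + 1)) atTop (nhds (f 0 + 1 / Y)) := by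
    have : (fun n => cfConv f (n + 1)) = fun n => f 0 + 1 / cfConv (fun i => f (i + 1)) n := by
      funext n; rfl
    rw [this]
    exact tendsto_const_nhds.add (tendsto_const_nhds.div hYs hY0)
  have ht2 : Filter.Tendsto (cfConv f) atTop (nhds (f 0 + 1 / Y)) :=
    (tendsto_add_atTop_iff_nat 1).mp ht
  rw [cfVal, ht2.limUnder_eq]

noncomputable def s30 : ℝ := Real.sqrt 30

lemma s30_sq : s30^2 = 30 := Real.sq_sqrt (by norm_num)
lemma s30_pos : 0 < s30 := Real.sqrt_pos.mpr (by norm_num)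
lemma s30_gt : 5.4 < s30 := by
  have : (5.4:ℝ) = Real.sqrt (5.4^2) := (Real.sqrt_sq (by norm_num)).symm
  rw [this]; apply Real.sqrt_lt_sqrt (by norm_num); norm_num
lemma s30_lt : s30 < 6 := by
  have : (6:ℝ) = Real.sqrt (6^2) := (Real.sqrt_sq (by norm_num)).symm
  rw [this]; apply Real.sqrt_lt_sqrt (by norm_num); norm_num

noncomputable def A12 : ℝ := (3 + s30)/6
noncomputable def A22 : ℝ := (4 + s30)/4
noncomputable def B21 : ℝ := (8 + 2*s30)/7
noncomputable def B22 : ℝ := (6 + 2*s30)/7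

noncomputable def Alow : ℕ → ℕ → ℝ := fun a b =>
  if a = 1 then (if b = 1 then 11/7 else A12) else (if b = 1 then 18/7 else A22)
noncomputable def Bup : ℕ → ℕ → ℝ := fun a b =>
  if a = 1 then 7/4 else (if b = 1 then B21 else B22)

lemma aux_le (a X c Y : ℝ) (hY : 0 < Y) (h : (X - a) * Y ≤ c) : X ≤ a + c/Y := by
  rw [← sub_le_iff_le_add', le_div_iff₀ hY]; linarith

lemma aux_ge (a X c Y : ℝ) (hY : 0 < Y) (h : c ≤ (X - a) * Y) : a + c/Y ≤ X := by
  rw [← le_sub_iff_add_le', div_le_iff₀ hY]; linarith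

lemma range_facts (a b : ℕ) (ha : a = 1 ∨ a = 2) (hb : b = 1 ∨ b = 2) :
    4/3 ≤ Alow a b ∧ Alow a b ≤ 3 ∧ 4/3 ≤ Bup a b ∧ Bup a b ≤ 3 := by
  have h1 := s30_gt; have h2 := s30_lt
  rcases ha with rfl | rfl <;> rcases hb with rfl | rfl <;>
    refine ⟨?_, ?_, ?_, ?_⟩ <;>
    simp only [Alow, Bup, A12, A22, B21, B22, if_true, if_false] <;>
    norm_num <;> nlinarith

lemma consistency (a b c : ℕ) (ha : a = 1 ∨ a = 2) (hb : b = 1 ∨ b = 2)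
    (hc : c = 1 ∨ c = 2) (h121 : ¬(a = 1 ∧ b = 2 ∧ c = 1)) :
    Alow a b ≤ (a : ℝ) + 1 / Bup b c ∧ (a : ℝ) + 1 / Alow b c ≤ Bup a b := by
  have h1 := s30_gt; have h2 := s30_lt; have h3 := s30_sq; have h0 := s30_pos
  rcases ha with rfl | rfl <;> rcases hb with rfl | rfl <;> rcases hc with rfl | rfl <;>
    [skip; skip; (exact absurd ⟨rfl, rfl, rfl⟩ h121); skip; skip; skip; skip; skip] <;>
    simp only [Alow, Bup, A12, A22, B21, B22, if_true, if_false] <;>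
    norm_num <;>
    first
    | (constructor <;>
        first
        | nlinarith
        | (apply aux_le _ _ _ _ (by nlinarith); nlinarith)
        | (apply aux_ge _ _ _ _ (by nlinarith); nlinarith))
    | nlinarith
    | (apply aux_le _ _ _ _ (by nlinarith); nlinarith)
    | (apply aux_ge _ _ _ _ (by nlinarith); nlinarith)

lemma step_lower (a A B ε Y : ℝ) (hB : 4/3 ≤ B) (hF : A ≤ a + 1/B) (hY : Y ≤ B + ε)
    (hY4 : 4/3 ≤ Y) (hε : 0 ≤ ε) : A - 9/16*ε ≤ a + 1/Y := by
  have hB0 : (0:ℝ) < B := by linarith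
  have hY0 : (0:ℝ) < Y := by linarith
  have h1 : 1/(B + ε) ≤ 1/Y := one_div_le_one_div_of_le hY0 hY
  have key : 1/B - 1/(B + ε) = ε/(B*(B + ε)) := by field_simp; ring
  have h2 : ε/(B*(B + ε)) ≤ 9/16*ε := by
    rw [div_le_iff₀ (by positivity)]
    nlinarith [mul_nonneg hε (show (0:ℝ) ≤ B*(B + ε) - 16/9 by nlinarith)]
  linarith

lemma step_upper (A ε Y : ℝ) (hA : 4/3 ≤ A) (hA3 : A ≤ 3) (hY : A - ε ≤ Y)
    (hY4 : 4/3 ≤ Y) (hε : 0 ≤ ε) : 1/Y ≤ 1/A + 9/16*ε := by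
  have hA0 : (0:ℝ) < A := by linarith
  have hY0 : (0:ℝ) < Y := by linarith
  rcases le_or_gt (4/3) (A - ε) with hc | hc
  · have h1 : 1/Y ≤ 1/(A - ε) := one_div_le_one_div_of_le (by linarith) hY
    have key : 1/(A - ε) - 1/A = ε/((A - ε)*A) := by
      field_simp; ring
    have h2 : ε/((A - ε)*A) ≤ 9/16*ε := by
      rw [div_le_iff₀ (by nlinarith)]
      nlinarith [mul_nonneg hε (show (0:ℝ) ≤ (A - ε)*A - 16/9 by nlinarith)]
    linarith
  · have h1 : 1/Y ≤ 3/4 := by rw [div_le_iff₀ hY0]; linarith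
    have h2 : (3:ℝ)/4 ≤ 1/A + 9/16*(A - 4/3) := by
      have e : 1/A * A = 1 := by field_simp
      nlinarith [e, sq_nonneg (3*A - 4), hA0, mul_pos hA0 hA0]
    nlinarith

def Adm (x : ℕ → ℕ) : Prop :=
  (∀ n, x n = 1 ∨ x n = 2) ∧ ∀ n, ¬(x n = 1 ∧ x (n + 1) = 2 ∧ x (n + 2) = 1)

lemma Adm.tail {x : ℕ → ℕ} (h : Adm x) : Adm (fun n => x (n + 1)) :=
  ⟨fun n => h.1 (n + 1), fun n => h.2 (n + 1)⟩

lemma adm_digits {x : ℕ → ℕ} (hx : ∀ n, x n = 1 ∨ x n = 2) :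
    Digits (fun n => (x n : ℝ)) := by
  intro i; rcases hx i with h | h <;> simp only [h] <;> norm_num

lemma CB_ind : ∀ (N : ℕ) (x : ℕ → ℕ), Adm x →
    Alow (x 0) (x 1) - 2*(9/16)^N ≤ cfVal (fun n => (x n : ℝ)) ∧
    cfVal (fun n => (x n : ℝ)) ≤ Bup (x 0) (x 1) + 2*(9/16)^N := by
  intro N
  induction N with
  | zero =>
    intro x hx
    have hm := cfVal_mem _ (adm_digits hx.1)
    obtain ⟨hr1, hr2, hr3, hr4⟩ := range_facts (x 0) (x 1) (hx.1 0) (hx.1 1)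
    norm_num
    constructor <;> linarith
  | succ N ih =>
    intro x hx
    have hAy : Adm (fun n => x (n + 1)) := hx.tail
    have ihy := ih _ hAy
    have hYm := cfVal_mem _ (adm_digits hAy.1)
    have hrec : cfVal (fun n => (x n : ℝ)) =
        (x 0 : ℝ) + 1/cfVal (fun n => (x (n + 1) : ℝ)) :=
      cfVal_rec _ (adm_digits hAy.1)
    obtain ⟨hF1, hF2⟩ := consistency (x 0) (x 1) (x 2) (hx.1 0) (hx.1 1) (hx.1 2) (hx.2 0)
    obtain ⟨hr1, hr2, hr3, hr4⟩ := range_facts (x 1) (x 2) (hx.1 1) (hx.1 2)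
    have hε : (0:ℝ) ≤ 2*(9/16)^N := by positivity
    have hee : (2:ℝ)*(9/16)^(N+1) = 9/16*(2*(9/16)^N) := by ring
    constructor
    · rw [hrec, hee]
      exact step_lower _ _ _ _ _ hr3 hF1 (by linarith [ihy.2]) hYm.1 hε
    · rw [hrec, hee]
      have := step_upper (Alow (x 1) (x 2)) (2*(9/16)^N) _ hr1 hr2
        (by linarith [ihy.1]) hYm.1 hε
      linarith

lemma CB (x : ℕ → ℕ) (hx : Adm x) :
    Alow (x 0) (x 1) ≤ cfVal (fun n => (x n : ℝ)) ∧
    cfVal (fun n => (x n : ℝ)) ≤ Bup (x 0) (x 1) := by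
  have hgeo : Filter.Tendsto (fun N : ℕ => (2:ℝ)*(9/16)^N) atTop (nhds 0) := by
    have := tendsto_pow_atTop_nhds_zero_of_lt_one (by norm_num : (0:ℝ) ≤ 9/16)
      (by norm_num : (9:ℝ)/16 < 1)
    simpa using this.const_mul 2
  constructor
  · have h1 : Filter.Tendsto (fun N : ℕ => Alow (x 0) (x 1) - 2*(9/16)^N) atTop
        (nhds (Alow (x 0) (x 1))) := by
      simpa using tendsto_const_nhds.sub hgeo
    exact le_of_tendsto h1 (Filter.Eventually.of_forall fun N => (CB_ind N x hx).1)
  · have h1 : Filter.Tendsto (fun N : ℕ => Bup (x 0) (x 1) + 2*(9/16)^N) atTop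
        (nhds (Bup (x 0) (x 1))) := by
      simpa using tendsto_const_nhds.add hgeo
    exact ge_of_tendsto h1 (Filter.Eventually.of_forall fun N => (CB_ind N x hx).2)

lemma inv_B22 : 1/B22 = (s30 - 3)/6 := by
  rw [B22, one_div_div, div_eq_div_iff (by nlinarith [s30_pos]) (by norm_num)]
  linear_combination (-2 : ℝ) * s30_sq
lemma inv_A22 : 1/A22 = (2*s30 - 8)/7 := by
  rw [A22, one_div_div, div_eq_div_iff (by nlinarith [s30_pos]) (by norm_num)]
  linear_combination (-2 : ℝ) * s30_sq
lemma inv_B21 : 1/B21 = (s30 - 4)/4 := by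
  rw [B21, one_div_div, div_eq_div_iff (by nlinarith [s30_pos]) (by norm_num)]
  linear_combination (-2 : ℝ) * s30_sq
lemma inv_A12 : 1/A12 = (2*s30 - 6)/7 := by
  rw [A12, one_div_div, div_eq_div_iff (by nlinarith [s30_pos]) (by norm_num)]
  linear_combination (-2 : ℝ) * s30_sq

lemma E1 : A12 = 1 + 1/B22 := by rw [inv_B22, A12]; ring
lemma E2 : B22 = 2 + 1/A22 := by rw [inv_A22, B22]; ring
lemma E3 : A22 = 2 + 1/B21 := by rw [inv_B21, A22]; ring
lemma E4 : B21 = 2 + 1/A12 := by rw [inv_A12, B21]; ring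

lemma contract_step (a u v U V : ℝ) (hU : 4/3 ≤ U) (hV : 4/3 ≤ V)
    (hu : u = a + 1/U) (hv : v = a + 1/V) : |u - v| ≤ 9/16 * |U - V| := by
  have hU0 : (0:ℝ) < U := by linarith
  have hV0 : (0:ℝ) < V := by linarith
  have e : u - v = (V - U)/(U*V) := by rw [hu, hv]; field_simp; ring
  rw [e, abs_div, abs_of_pos (mul_pos hU0 hV0), abs_sub_comm V U,
    div_le_iff₀ (mul_pos hU0 hV0)]
  nlinarith [mul_nonneg (abs_nonneg (U - V)) (show (0:ℝ) ≤ U*V - 16/9 by nlinarith)]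

/-- The four periodic tails. -/
noncomputable def pc : ℕ → ℕ → ℝ := fun j n => if n % 4 = j then 1 else 2

lemma pc_digits (j : ℕ) : Digits (pc j) := by
  intro i; unfold pc; split <;> norm_num

lemma pc_tail (j : ℕ) (hj : j < 3) : (fun i => pc (j + 1) (i + 1)) = pc j := by
  funext i
  have h : (i + 1) % 4 = j + 1 ↔ i % 4 = j := by omega
  simp only [pc, h]

lemma pc_tail0 : (fun i => pc 0 (i + 1)) = pc 3 := by
  funext i
  have h : (i + 1) % 4 = 0 ↔ i % 4 = 3 := by omega
  simp only [pc, h]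

lemma pc_val : cfVal (pc 0) = A12 ∧ cfVal (pc 2) = A22 := by
  have d0 : Digits (fun i => pc 0 (i + 1)) := by rw [pc_tail0]; exact pc_digits 3
  have d1 : Digits (fun i => pc 1 (i + 1)) := by
    rw [show (1:ℕ) = 0 + 1 from rfl, pc_tail 0 (by norm_num)]; exact pc_digits 0
  have d2 : Digits (fun i => pc 2 (i + 1)) := by
    rw [show (2:ℕ) = 1 + 1 from rfl, pc_tail 1 (by norm_num)]; exact pc_digits 1
  have d3 : Digits (fun i => pc 3 (i + 1)) := by
    rw [show (3:ℕ) = 2 + 1 from rfl, pc_tail 2 (by norm_num)]; exact pc_digits 2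
  have e0 : cfVal (pc 0) = 1 + 1/cfVal (pc 3) := by
    have := cfVal_rec (pc 0) d0
    rw [pc_tail0] at this
    simpa [pc] using this
  have e1 : cfVal (pc 1) = 2 + 1/cfVal (pc 0) := by
    have := cfVal_rec (pc 1) d1
    rw [show (1:ℕ) = 0 + 1 from rfl, pc_tail 0 (by norm_num)] at this
    simpa [pc] using this
  have e2 : cfVal (pc 2) = 2 + 1/cfVal (pc 1) := by
    have := cfVal_rec (pc 2) d2
    rw [show (2:ℕ) = 1 + 1 from rfl, pc_tail 1 (by norm_num)] at this
    simpa [pc] using this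
  have e3 : cfVal (pc 3) = 2 + 1/cfVal (pc 2) := by
    have := cfVal_rec (pc 3) d3
    rw [show (3:ℕ) = 2 + 1 from rfl, pc_tail 2 (by norm_num)] at this
    simpa [pc] using this
  have m0 := cfVal_mem (pc 0) (pc_digits 0)
  have m1 := cfVal_mem (pc 1) (pc_digits 1)
  have m2 := cfVal_mem (pc 2) (pc_digits 2)
  have m3 := cfVal_mem (pc 3) (pc_digits 3)
  have hA12 : (4:ℝ)/3 ≤ A12 := by have := s30_gt; rw [A12]; nlinarith
  have hA22 : (4:ℝ)/3 ≤ A22 := by have := s30_gt; rw [A22]; nlinarith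
  have hB21 : (4:ℝ)/3 ≤ B21 := by have := s30_gt; rw [B21]; nlinarith
  have hB22 : (4:ℝ)/3 ≤ B22 := by have := s30_gt; rw [B22]; nlinarith
  have c0 := contract_step 1 (cfVal (pc 0)) A12 (cfVal (pc 3)) B22 m3.1 hB22 e0 E1
  have c3 := contract_step 2 (cfVal (pc 3)) B22 (cfVal (pc 2)) A22 m2.1 hA22 e3 E2
  have c2 := contract_step 2 (cfVal (pc 2)) A22 (cfVal (pc 1)) B21 m1.1 hB21 e2 E3
  have c1 := contract_step 2 (cfVal (pc 1)) B21 (cfVal (pc 0)) A12 m0.1 hA12 e1 E4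
  have h0 : |cfVal (pc 0) - A12| ≤ 0 := by
    nlinarith [abs_nonneg (cfVal (pc 0) - A12), abs_nonneg (cfVal (pc 3) - B22),
      abs_nonneg (cfVal (pc 2) - A22), abs_nonneg (cfVal (pc 1) - B21)]
  have h0' : cfVal (pc 0) = A12 := by
    have := abs_eq_zero.mp (le_antisymm h0 (abs_nonneg _)); linarith
  refine ⟨h0', ?_⟩
  have h2 : |cfVal (pc 2) - A22| ≤ 0 := by
    nlinarith [abs_nonneg (cfVal (pc 2) - A22), abs_nonneg (cfVal (pc 1) - B21), h0]
  have := abs_eq_zero.mp (le_antisymm h2 (abs_nonneg _)); linarith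

lemma A12_ge : (4:ℝ)/3 ≤ A12 := by have := s30_gt; rw [A12]; nlinarith
lemma A22_ge : (4:ℝ)/3 ≤ A22 := by have := s30_gt; rw [A22]; nlinarith

lemma mk_factor (α : ℤ → ℕ) (j : ℤ) (h0 : α j = 1) (h1 : α (j + 1) = 2)
    (h2 : α (j + 2) = 1) : hasFactor α [1, 2, 1] := by
  refine ⟨j, fun i => ?_⟩
  fin_cases i <;> simp_all

lemma adm_right (α : ℤ → ℕ) (hα : ∀ n, α n = 1 ∨ α n = 2)
    (hno : ¬ hasFactor α [1, 2, 1]) (m : ℤ) : Adm (fun n : ℕ => α (m + n)) := by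
  constructor
  · intro n; exact hα _
  · rintro n ⟨p0, p1, p2⟩
    apply hno
    refine mk_factor α (m + n) p0 ?_ ?_
    · have e : m + (n:ℤ) + 1 = m + ((n + 1 : ℕ) : ℤ) := by push_cast; ring
      rw [e]; exact p1
    · have e : m + (n:ℤ) + 2 = m + ((n + 2 : ℕ) : ℤ) := by push_cast; ring
      rw [e]; exact p2

lemma adm_left (α : ℤ → ℕ) (hα : ∀ n, α n = 1 ∨ α n = 2)
    (hno : ¬ hasFactor α [1, 2, 1]) (m : ℤ) : Adm (fun n : ℕ => α (m - n)) := by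
  constructor
  · intro n; exact hα _
  · rintro n ⟨p0, p1, p2⟩
    apply hno
    refine mk_factor α (m - n - 2) ?_ ?_ ?_
    · have e : m - (n:ℤ) - 2 = m - ((n + 2 : ℕ) : ℤ) := by push_cast; ring
      rw [e]; exact p2
    · have e : m - (n:ℤ) - 2 + 1 = m - ((n + 1 : ℕ) : ℤ) := by push_cast; ring
      rw [e]; exact p1
    · have e : m - (n:ℤ) - 2 + 2 = m - (n:ℤ) := by ring
      rw [e]; exact p0

lemma lambda_eq (α : ℤ → ℕ) (hα : ∀ n, α n = 1 ∨ α n = 2) (k : ℤ) :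
    lambdaVal α k = (α k : ℝ) +
      1/cfVal (fun n : ℕ => (α (k + 1 + n) : ℝ)) +
      1/cfVal (fun n : ℕ => (α (k - 1 - n) : ℝ)) := by
  have dR : Digits (fun n : ℕ => (α (k + 1 + n) : ℝ)) := by
    intro i; rcases hα (k + 1 + i) with h | h <;> simp [h]
  have dL : Digits (fun n : ℕ => (α (k - 1 - n) : ℝ)) := by
    intro i; rcases hα (k - 1 - i) with h | h <;> simp [h]
  have heqR : (fun i : ℕ => ((α (k + ((i + 1 : ℕ) : ℤ)) : ℕ) : ℝ)) =
      fun n : ℕ => (α (k + 1 + n) : ℝ) := by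
    funext i
    have e : k + ((i + 1 : ℕ) : ℤ) = k + 1 + (i : ℤ) := by push_cast; ring
    rw [e]
  have heqL : (fun i : ℕ => if (i + 1 : ℕ) = 0 then (0:ℝ) else (α (k - ((i + 1 : ℕ) : ℤ)) : ℝ)) =
      fun n : ℕ => (α (k - 1 - n) : ℝ) := by
    funext i
    rw [if_neg (Nat.succ_ne_zero i)]
    have e : k - ((i + 1 : ℕ) : ℤ) = k - 1 - (i : ℤ) := by push_cast; ring
    rw [e]
  unfold lambdaVal
  have h1 : cfVal (fun n : ℕ => (α (k + n) : ℝ)) =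
      (α (k + ((0:ℕ):ℤ)) : ℝ) + 1/cfVal (fun n : ℕ => (α (k + 1 + n) : ℝ)) := by
    have := cfVal_rec (fun n : ℕ => (α (k + n) : ℝ)) (by rw [show (fun i : ℕ => ((α (k + ((i + 1 : ℕ) : ℤ)) : ℕ) : ℝ)) = _ from heqR]; exact dR)
    rw [this, heqR]
  have h2 : cfVal (fun n : ℕ => if n = 0 then (0:ℝ) else (α (k - n) : ℝ)) =
      1/cfVal (fun n : ℕ => (α (k - 1 - n) : ℝ)) := by
    have := cfVal_rec (fun n : ℕ => if n = 0 then (0:ℝ) else (α (k - n) : ℝ))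
      (by rw [show (fun i : ℕ => if (i + 1 : ℕ) = 0 then (0:ℝ) else (α (k - ((i + 1 : ℕ) : ℤ)) : ℝ)) = _ from heqL]; exact dL)
    rw [this, heqL]
    norm_num
  rw [h1, h2]
  have e0 : k + ((0:ℕ):ℤ) = k := by norm_num
  rw [e0]

lemma cfVal_lower (x : ℕ → ℕ) (hx : Adm x) :
    (x 0 = 1 → A12 ≤ cfVal (fun n => (x n : ℝ))) ∧
    (x 0 = 2 → A22 ≤ cfVal (fun n => (x n : ℝ))) := by
  have h := (CB x hx).1
  have hg := s30_gt; have hl := s30_lt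
  constructor
  · intro h0
    rcases hx.1 1 with h1 | h1 <;> rw [h0, h1] at h <;> simp only [Alow] at h <;>
      norm_num at h
    · have : A12 ≤ 11/7 := by rw [A12]; nlinarith
      linarith
    · exact h
  · intro h0
    rcases hx.1 1 with h1 | h1 <;> rw [h0, h1] at h <;> simp only [Alow] at h <;>
      norm_num at h
    · have : A22 ≤ 18/7 := by rw [A22]; nlinarith
      linarith
    · exact h

lemma lambda_bound (α : ℤ → ℕ) (hα : ∀ n, α n = 1 ∨ α n = 2)
    (hno : ¬ hasFactor α [1, 2, 1]) (k : ℤ) : lambdaVal α k ≤ 4*s30/7 := by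
  rw [lambda_eq α hα k]
  have hRadm := adm_right α hα hno (k + 1)
  have hLadm := adm_left α hα hno (k - 1)
  have hRm := cfVal_mem _ (adm_digits hRadm.1)
  have hLm := cfVal_mem _ (adm_digits hLadm.1)
  have hRv := cfVal_lower _ hRadm
  have hLv := cfVal_lower _ hLadm
  have hg := s30_gt; have hl := s30_lt
  have hA12p : (0:ℝ) < A12 := lt_of_lt_of_le (by norm_num) A12_ge
  have hA22p : (0:ℝ) < A22 := lt_of_lt_of_le (by norm_num) A22_ge
  set R := cfVal (fun n : ℕ => (α (k + 1 + n) : ℝ)) with hRdef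
  set L := cfVal (fun n : ℕ => (α (k - 1 - n) : ℝ)) with hLdef
  have hR0 : (0:ℝ) < R := by linarith [hRm.1]
  have hL0 : (0:ℝ) < L := by linarith [hLm.1]
  rcases hα k with hk | hk
  · rw [hk]
    have r1 : 1/R ≤ 3/4 := by rw [div_le_iff₀ hR0]; linarith [hRm.1]
    have l1 : 1/L ≤ 3/4 := by rw [div_le_iff₀ hL0]; linarith [hLm.1]
    push_cast
    nlinarith
  · rcases hα (k + 1) with h1 | h1 <;> rcases hα (k - 1) with h2 | h2
    · exact absurd (mk_factor α (k - 1) h2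
        (by rw [show k - 1 + 1 = k by ring]; exact hk)
        (by rw [show k - 1 + 2 = k + 1 by ring]; exact h1)) hno
    · have hR : A12 ≤ R := hRv.1 (by simpa using h1)
      have hL : A22 ≤ L := hLv.2 (by simpa using h2)
      have r1 : 1/R ≤ 1/A12 := one_div_le_one_div_of_le hA12p hR
      have l1 : 1/L ≤ 1/A22 := one_div_le_one_div_of_le hA22p hL
      rw [inv_A12] at r1; rw [inv_A22] at l1
      rw [hk]
      push_cast
      linarith
    · have hR : A22 ≤ R := hRv.2 (by simpa using h1)
      have hL : A12 ≤ L := hLv.1 (by simpa using h2)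
      have r1 : 1/R ≤ 1/A22 := one_div_le_one_div_of_le hA22p hR
      have l1 : 1/L ≤ 1/A12 := one_div_le_one_div_of_le hA12p hL
      rw [inv_A22] at r1; rw [inv_A12] at l1
      rw [hk]
      push_cast
      linarith
    · have hR : A22 ≤ R := hRv.2 (by simpa using h1)
      have hL : A22 ≤ L := hLv.2 (by simpa using h2)
      have r1 : 1/R ≤ 1/A22 := one_div_le_one_div_of_le hA22p hR
      have l1 : 1/L ≤ 1/A22 := one_div_le_one_div_of_le hA22p hL
      rw [inv_A22] at r1 l1
      rw [hk]
      push_cast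
      linarith

lemma per_digits : ∀ n, per2122 n = 1 ∨ per2122 n = 2 := by
  intro n; unfold per2122; split <;> simp

lemma per_nofactor : ¬ hasFactor per2122 [1, 2, 1] := by
  rintro ⟨j, hj⟩
  have h0 := hj ⟨0, by norm_num⟩
  have h2 := hj ⟨2, by norm_num⟩
  simp [per2122] at h0 h2
  omega

noncomputable def rfun : ℕ → ℝ := fun n => if n = 0 then 2 else if n % 4 = 1 then 1 else 2
noncomputable def lfun : ℕ → ℝ := fun n => if n = 0 then 0 else if n % 4 = 3 then 1 else 2

lemma rfun_tail : (fun i => rfun (i + 1)) = pc 0 := by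
  funext i
  simp only [rfun, pc]
  rw [if_neg (by omega : ¬(i + 1 = 0))]
  have h : (i + 1) % 4 = 1 ↔ i % 4 = 0 := by omega
  simp only [h]

lemma lfun_tail : (fun i => lfun (i + 1)) = pc 2 := by
  funext i
  simp only [lfun, pc]
  rw [if_neg (by omega : ¬(i + 1 = 0))]
  have h : (i + 1) % 4 = 3 ↔ i % 4 = 2 := by omega
  simp only [h]

lemma rfun_val : cfVal rfun = 2 + 1/A12 := by
  have h := cfVal_rec rfun (by rw [rfun_tail]; exact pc_digits 0)
  rw [rfun_tail] at h
  rw [h, pc_val.1]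
  norm_num [rfun]

lemma lfun_val : cfVal lfun = 1/A22 := by
  have h := cfVal_rec lfun (by rw [lfun_tail]; exact pc_digits 2)
  rw [lfun_tail] at h
  rw [h, pc_val.2]
  norm_num [lfun]

lemma sum_val : cfVal rfun + cfVal lfun = 4*s30/7 := by
  rw [rfun_val, lfun_val, inv_A12, inv_A22]; ring

lemma lambda0 : lambdaVal per2122 0 = cfVal rfun + cfVal lfun := by
  have fe1 : (fun n : ℕ => (per2122 (0 + (n:ℤ)) : ℝ)) = rfun := by
    funext n
    simp only [zero_add, per2122, rfun]
    by_cases h : n = 0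
    · subst h; norm_num
    · rw [if_neg h]
      have hi : ((n:ℤ) % 4 = 1) ↔ (n % 4 = 1) := by omega
      by_cases h4 : n % 4 = 1
      · rw [if_pos (hi.mpr h4), if_pos h4]; norm_num
      · rw [if_neg (fun c => h4 (hi.mp c)), if_neg h4]; norm_num
  have fe2 : (fun n : ℕ => if n = 0 then (0:ℝ) else (per2122 (0 - (n:ℤ)) : ℝ)) = lfun := by
    funext n
    by_cases h : n = 0
    · subst h; simp [lfun]
    · rw [if_neg h]
      simp only [lfun, per2122, zero_sub]
      rw [if_neg h]
      have hi : ((-(n:ℤ)) % 4 = 1) ↔ (n % 4 = 3) := by omega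
      by_cases h4 : n % 4 = 3
      · rw [if_pos (hi.mpr h4), if_pos h4]; norm_num
      · rw [if_neg (fun c => h4 (hi.mp c)), if_neg h4]; norm_num
  unfold lambdaVal
  rw [fe1, fe2]

lemma markov_per : markovValue per2122 = cfVal rfun + cfVal lfun := by
  have hb : ∀ k, lambdaVal per2122 k ≤ cfVal rfun + cfVal lfun := by
    intro k
    rw [sum_val]
    exact lambda_bound per2122 per_digits per_nofactor k
  apply le_antisymm
  · exact ciSup_le hb
  · rw [← lambda0]
    exact le_ciSup ⟨cfVal rfun + cfVal lfun, by rintro _ ⟨k, rfl⟩; exact hb k⟩ 0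


end CFAux

/-- Among all `α ∈ {1,2}^ℤ` avoiding the factor `(1,2,1)`, the supremum of the
Markov values is `4√30/7`, attained by the periodic sequence of period
`(2,1,2,2)`, whose Markov value is `[2; \overline{1,2,2,2}] + [0; \overline{2,2,1,2}]
= 4√30/7`. -/
theorem largest_markov_value_without_121 :
    (∀ α : ℤ → ℕ, (∀ n, α n = 1 ∨ α n = 2) → ¬ hasFactor α [1, 2, 1] →
      markovValue α ≤ 4 * Real.sqrt 30 / 7) ∧
    (∀ n, per2122 n = 1 ∨ per2122 n = 2) ∧
    ¬ hasFactor per2122 [1, 2, 1] ∧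
    markovValue per2122 =
      cfVal (fun n => if n = 0 then 2 else if n % 4 = 1 then 1 else 2) +
        cfVal (fun n => if n = 0 then 0 else if n % 4 = 3 then 1 else 2) ∧
    cfVal (fun n => if n = 0 then 2 else if n % 4 = 1 then 1 else 2) +
        cfVal (fun n => if n = 0 then 0 else if n % 4 = 3 then 1 else 2) =
      4 * Real.sqrt 30 / 7 := by
  refine ⟨?_, per_digits, per_nofactor, ?_, ?_⟩
  · intro α hα hno
    exact ciSup_le (fun k => lambda_bound α hα hno k)
  · exact markov_per
  · exact sum_val
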